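/- In the mixed Deffuant model with i.i.d. initial opinions in Δ, assume inf_{t≥0} μ(t) > 0, ε > r̂, and that the social graph E(t) is a connected graph on V for infinitely many times t. Then for every η with 0 < η < ε − r̂, setting δ = η/|V|, the event A = { T_δ < ∞ and ‖x_i(T_δ) − ĉ‖ ≤ ε − r̂ − η for some i ∈ V } is almost surely contained in the consensus event 𝒞, i.e., P(A \ 𝒞) = 0. -/

import Mathlib

open MeasureTheory ProbabilityTheory Filter
open scoped ENNReal

open scoped Classical in
/-- One step of the mixed Deffuant model: given confidence threshold `ε`, convergence
parameter `μt`, social edge set `Et` and selected (unordered) pair `p`, each endpoint of `p`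
moves toward the other at rate `μt` provided `p` is a social edge and the two opinions are
within distance `ε`; all other agents keep their opinion. -/
noncomputable def deffuantStep {V W : Type*} [NormedAddCommGroup W] [NormedSpace ℝ W]
    (ε μt : ℝ) (Et : Set (Sym2 V)) (p : Sym2 V) (x : V → W) : V → W :=
  fun k =>
    if h : k ∈ p then
      if p ∈ Et ∧ ‖x k - x (Sym2.Mem.other h)‖ ≤ ε then
        x k + μt • (x (Sym2.Mem.other h) - x k)
      else x k
    else x k

/-- The trajectory of the mixed Deffuant model with confidence threshold `ε`, convergence
parameters `μ`, social edge sets `E`, selected pairs `e` and initial opinions `x0`. -/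
noncomputable def deffuantTraj {V W : Type*} [NormedAddCommGroup W] [NormedSpace ℝ W]
    (ε : ℝ) (μ : ℕ → ℝ) (E : ℕ → Set (Sym2 V)) (e : ℕ → Sym2 V) (x0 : V → W) :
    ℕ → V → W
  | 0 => x0
  | t + 1 => deffuantStep ε (μ t) (E t) (e t) (deffuantTraj ε μ E e x0 t)

/-- The sample path of the mixed Deffuant model with random selected pairs `e` and random
initial opinions `x0`, at sample point `ω`. -/
noncomputable def deffuantPath {d : ℕ} {V Ω : Type*} (ε : ℝ) (μ : ℕ → ℝ)
    (E : ℕ → Set (Sym2 V)) (e : ℕ → Ω → Sym2 V)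
    (x0 : V → Ω → EuclideanSpace ℝ (Fin d)) (ω : Ω) : ℕ → V → EuclideanSpace ℝ (Fin d) :=
  deffuantTraj ε μ E (fun t => e t ω) (fun i => x0 i ω)

/-- The social graph with edge set `Et`. -/
def socialGraph {V : Type*} (Et : Set (Sym2 V)) : SimpleGraph V where
  Adj i j := i ≠ j ∧ s(i, j) ∈ Et
  symm := ⟨by
    rintro i j ⟨h1, h2⟩
    exact ⟨h1.symm, by rwa [Sym2.eq_swap]⟩⟩
  loopless := ⟨fun i h => h.1 rfl⟩

/-- The profile graph: its edges are the pairs that are both socially connected (in `Et`) and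
opinion-connected (opinions within distance `ε`). -/
def profileGraph {V W : Type*} [NormedAddCommGroup W]
    (ε : ℝ) (Et : Set (Sym2 V)) (x : V → W) : SimpleGraph V where
  Adj i j := i ≠ j ∧ s(i, j) ∈ Et ∧ ‖x i - x j‖ ≤ ε
  symm := ⟨by
    rintro i j ⟨h1, h2, h3⟩
    exact ⟨h1.symm, by rwa [Sym2.eq_swap], by rwa [norm_sub_rev]⟩⟩
  loopless := ⟨fun i h => h.1 rfl⟩

/-- The set of times `t` entering the definition of the stopping time `T_δ`: the profile at
time `t` is connected and, for every `s ≥ t`, every edge of the profile at time `s` has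
length at most `δ`.  `T_δ` is the infimum of this set, and `T_δ < ∞` iff it is nonempty. -/
noncomputable def goodTimes {d : ℕ} {V Ω : Type*} (ε δ : ℝ) (μ : ℕ → ℝ)
    (E : ℕ → Set (Sym2 V)) (e : ℕ → Ω → Sym2 V)
    (x0 : V → Ω → EuclideanSpace ℝ (Fin d)) (ω : Ω) : Set ℕ :=
  {t | (profileGraph ε (E t) (deffuantPath ε μ E e x0 ω t)).Connected ∧
    ∀ s, t ≤ s → ∀ i j : V, s(i, j) ∈ E s →
      ‖deffuantPath ε μ E e x0 ω s i - deffuantPath ε μ E e x0 ω s j‖ ≤ ε →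
      ‖deffuantPath ε μ E e x0 ω s i - deffuantPath ε μ E e x0 ω s j‖ ≤ δ}

/-- The consensus event `𝒞`: the sample points for which the maximal distance between two
opinions tends to `0` (its limit superior is `0`). -/
noncomputable def consensusSet {d : ℕ} {V Ω : Type*} (ε : ℝ) (μ : ℕ → ℝ)
    (E : ℕ → Set (Sym2 V)) (e : ℕ → Ω → Sym2 V)
    (x0 : V → Ω → EuclideanSpace ℝ (Fin d)) : Set Ω :=
  {ω | Filter.limsup (fun t => ⨆ i : V, ⨆ j : V,
    ‖deffuantPath ε μ E e x0 ω t i - deffuantPath ε μ E e x0 ω t j‖) Filter.atTop = 0}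

/-- Index-dependent codomain for the joint family of the initial opinions (indexed by agents,
`Sum.inl`) and the selected pairs (indexed by times, `Sum.inr`). -/
def mixType (d : ℕ) (V : Type) : V ⊕ ℕ → Type
  | Sum.inl _ => EuclideanSpace ℝ (Fin d)
  | Sum.inr _ => Sym2 V

/-- Measurable space structures on the joint family: Borel on the opinion space, discrete
(`⊤`) on the finitely many pairs. -/
noncomputable def mixMS (d : ℕ) (V : Type) : ∀ k, MeasurableSpace (mixType d V k)
  | Sum.inl _ => (inferInstance : MeasurableSpace (EuclideanSpace ℝ (Fin d)))
  | Sum.inr _ => (⊤ : MeasurableSpace (Sym2 V))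

/-- The joint family of random variables consisting of the initial opinions and the selected
pairs; requiring this family to be `iIndepFun` says that the initial opinions are independent,
the selected pairs are independent, and the two collections are independent of each other. -/
def mixFun {d : ℕ} {V : Type} {Ω : Type*} (x0 : V → Ω → EuclideanSpace ℝ (Fin d))
    (e : ℕ → Ω → Sym2 V) : ∀ k : V ⊕ ℕ, Ω → mixType d V k
  | Sum.inl i => x0 i
  | Sum.inr t => e t

open scoped Topology

section Aux
variable {V : Type*} {W : Type*} [NormedAddCommGroup W] [NormedSpace ℝ W]

lemma deffuantStep_rep (ε μt : ℝ) (Et : Set (Sym2 V)) (p : Sym2 V) (x : V → W) (k : V) :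
    ∃ l, deffuantStep ε μt Et p x k = x k + μt • (x l - x k) := by
  unfold deffuantStep
  split
  · split
    · exact ⟨_, rfl⟩
    · exact ⟨k, by simp⟩
  · exact ⟨k, by simp⟩

lemma deffuantStep_dist_le {ε μt : ℝ} (hμ0 : 0 ≤ μt) (hμ1 : μt ≤ 1)
    {Et : Set (Sym2 V)} {p : Sym2 V} {x : V → W} {D : ℝ}
    (hD : ∀ i j, ‖x i - x j‖ ≤ D) (k l : V) :
    ‖deffuantStep ε μt Et p x k - deffuantStep ε μt Et p x l‖ ≤ D := by
  obtain ⟨a, ha⟩ := deffuantStep_rep ε μt Et p x k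
  obtain ⟨b, hb⟩ := deffuantStep_rep ε μt Et p x l
  rw [ha, hb]
  have hre : (x k + μt • (x a - x k)) - (x l + μt • (x b - x l))
      = (1 - μt) • (x k - x l) + μt • (x a - x b) := by
    module
  rw [hre]
  calc ‖(1 - μt) • (x k - x l) + μt • (x a - x b)‖
      ≤ ‖(1 - μt) • (x k - x l)‖ + ‖μt • (x a - x b)‖ := norm_add_le _ _
    _ ≤ (1 - μt) * D + μt * D := by
        rw [norm_smul, norm_smul, Real.norm_eq_abs, Real.norm_eq_abs,
          abs_of_nonneg (by linarith), abs_of_nonneg hμ0]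
        gcongr
        · exact hD k l
        · exact hD a b
    _ = D := by ring

lemma deffuantStep_apply_not_mem {ε μt : ℝ} {Et : Set (Sym2 V)} {p : Sym2 V} {x : V → W}
    {k : V} (h : k ∉ p) : deffuantStep ε μt Et p x k = x k := by
  unfold deffuantStep; rw [dif_neg h]

lemma deffuantStep_apply_left {ε μt : ℝ} {Et : Set (Sym2 V)} {a b : V} {x : V → W}
    (hc : s(a,b) ∈ Et ∧ ‖x a - x b‖ ≤ ε) :
    deffuantStep ε μt Et s(a,b) x a = x a + μt • (x b - x a) := by
  have hmem : a ∈ s(a,b) := Sym2.mem_mk_left a b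
  have hother : Sym2.Mem.other hmem = b := Sym2.congr_right.mp (Sym2.other_spec hmem)
  unfold deffuantStep
  rw [dif_pos hmem, hother, if_pos hc]

lemma deffuantStep_apply_left_neg {ε μt : ℝ} {Et : Set (Sym2 V)} {a b : V} {x : V → W}
    (hc : ¬ (s(a,b) ∈ Et ∧ ‖x a - x b‖ ≤ ε)) :
    deffuantStep ε μt Et s(a,b) x a = x a := by
  have hmem : a ∈ s(a,b) := Sym2.mem_mk_left a b
  have hother : Sym2.Mem.other hmem = b := Sym2.congr_right.mp (Sym2.other_spec hmem)
  unfold deffuantStep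
  rw [dif_pos hmem, hother, if_neg hc]

lemma deffuantStep_apply_right {ε μt : ℝ} {Et : Set (Sym2 V)} {a b : V} {x : V → W}
    (hc : s(a,b) ∈ Et ∧ ‖x a - x b‖ ≤ ε) :
    deffuantStep ε μt Et s(a,b) x b = x b + μt • (x a - x b) := by
  obtain ⟨h1, h2⟩ := hc
  rw [Sym2.eq_swap]
  exact deffuantStep_apply_left ⟨by rwa [Sym2.eq_swap], by rwa [norm_sub_rev]⟩

lemma deffuantStep_apply_right_neg {ε μt : ℝ} {Et : Set (Sym2 V)} {a b : V} {x : V → W}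
    (hc : ¬ (s(a,b) ∈ Et ∧ ‖x a - x b‖ ≤ ε)) :
    deffuantStep ε μt Et s(a,b) x b = x b := by
  rw [Sym2.eq_swap]
  apply deffuantStep_apply_left_neg
  rintro ⟨h1, h2⟩
  exact hc ⟨by rwa [Sym2.eq_swap] at h1, by rwa [norm_sub_rev]⟩

lemma deffuantStep_apply_diag {ε μt : ℝ} {Et : Set (Sym2 V)} {a : V} {x : V → W} (k : V) :
    deffuantStep ε μt Et s(a,a) x k = x k := by
  by_cases hk : k ∈ s(a,a)
  · have hka : k = a := by simpa using hk
    subst hka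
    have hother : Sym2.Mem.other hk = k := Sym2.congr_right.mp (Sym2.other_spec hk)
    unfold deffuantStep
    rw [dif_pos hk, hother]
    split <;> simp
  · exact deffuantStep_apply_not_mem hk

end Aux
section Aux2

lemma deffuant_key_ineq {W : Type*} [NormedAddCommGroup W] [InnerProductSpace ℝ W]
    (u v : W) {c : ℝ} (h0 : 0 ≤ c) (h2 : c ≤ 1/2) :
    ‖u + c • (v - u)‖^2 + ‖v + c • (u - v)‖^2 ≤ ‖u‖^2 + ‖v‖^2 - c * ‖u - v‖^2 := by
  have e1 : ‖u + c • (v - u)‖^2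
      = ‖u‖^2 + 2 * (c * (inner ℝ u (v - u) : ℝ)) + c^2 * ‖v - u‖^2 := by
    rw [norm_add_sq_real, real_inner_smul_right, norm_smul, Real.norm_eq_abs, mul_pow, sq_abs]
  have e2 : ‖v + c • (u - v)‖^2
      = ‖v‖^2 + 2 * (c * (inner ℝ v (u - v) : ℝ)) + c^2 * ‖u - v‖^2 := by
    rw [norm_add_sq_real, real_inner_smul_right, norm_smul, Real.norm_eq_abs, mul_pow, sq_abs]
  have hvu : ‖v - u‖ = ‖u - v‖ := norm_sub_rev _ _
  have hinner : (inner ℝ u (v - u) : ℝ) + (inner ℝ v (u - v) : ℝ) = -‖u - v‖^2 := by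
    have h3 : (inner ℝ v (u - v) : ℝ) = -(inner ℝ v (v - u) : ℝ) := by
      rw [← inner_neg_right]; congr 1; abel
    have h4 : (inner ℝ u (v - u) : ℝ) - (inner ℝ v (v - u) : ℝ) = (inner ℝ (u - v) (v - u) : ℝ) :=
      (inner_sub_left _ _ _).symm
    have h5 : (inner ℝ (u - v) (v - u) : ℝ) = -(inner ℝ (u - v) (u - v) : ℝ) := by
      rw [← inner_neg_right]; congr 1; abel
    have h6 : (inner ℝ (u - v) (u - v) : ℝ) = ‖u - v‖^2 := real_inner_self_eq_norm_sq _
    linarith [h3, h4, h5, h6]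
  rw [e1, e2, hvu]
  have h8 : 2 * (c * (inner ℝ u (v - u) : ℝ)) + 2 * (c * (inner ℝ v (u - v) : ℝ))
      = -(2 * (c * ‖u - v‖^2)) := by
    have h9 := congrArg (fun z => 2 * (c * z)) hinner
    beta_reduce at h9
    linarith [h9]
  have hprod : (0:ℝ) ≤ c * ((1 - 2*c) * ‖u - v‖^2) :=
    mul_nonneg h0 (mul_nonneg (by linarith) (sq_nonneg _))
  linarith [h8, hprod]

lemma sum_split {V : Type*} [DecidableEq V] [Fintype V] {a b : V} (hab : a ≠ b) (f : V → ℝ) :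
    ∑ k, f k = f a + f b + ∑ k ∈ (Finset.univ.erase a).erase b, f k := by
  have h1 : b ∈ Finset.univ.erase a := Finset.mem_erase.mpr ⟨hab.symm, Finset.mem_univ b⟩
  rw [← Finset.add_sum_erase _ f (Finset.mem_univ a), ← Finset.add_sum_erase _ f h1, add_assoc]

lemma deffuantStep_energy_drop {V : Type*} [Fintype V] {W : Type*}
    [NormedAddCommGroup W] [InnerProductSpace ℝ W]
    {ε c : ℝ} (h0 : 0 ≤ c) (h2 : c ≤ 1/2) {Et : Set (Sym2 V)} {a b : V} (hab : a ≠ b)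
    {x : V → W} (hEt : s(a,b) ∈ Et) (hgap : ‖x a - x b‖ ≤ ε) :
    ∑ k, ‖deffuantStep ε c Et s(a,b) x k‖^2 ≤ (∑ k, ‖x k‖^2) - c * ‖x a - x b‖^2 := by
  classical
  set y := deffuantStep ε c Et s(a,b) x with hy
  have hya : y a = x a + c • (x b - x a) := deffuantStep_apply_left ⟨hEt, hgap⟩
  have hyb : y b = x b + c • (x a - x b) := deffuantStep_apply_right ⟨hEt, hgap⟩
  have hyk : ∀ k ∈ (Finset.univ.erase a).erase b, ‖y k‖^2 = ‖x k‖^2 := by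
    intro k hk
    rw [Finset.mem_erase, Finset.mem_erase] at hk
    rw [hy, deffuantStep_apply_not_mem]
    rw [Sym2.mem_iff]
    push_neg
    exact ⟨hk.2.1, hk.1⟩
  rw [sum_split hab (fun k => ‖y k‖^2), sum_split hab (fun k => ‖x k‖^2),
    Finset.sum_congr rfl hyk, hya, hyb]
  have := deffuant_key_ineq (x a) (x b) h0 h2
  linarith

lemma deffuantStep_energy_le {V : Type*} [Fintype V] {W : Type*}
    [NormedAddCommGroup W] [InnerProductSpace ℝ W]
    {ε c : ℝ} (h0 : 0 ≤ c) (h2 : c ≤ 1/2) {Et : Set (Sym2 V)} (p : Sym2 V)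
    (x : V → W) :
    ∑ k, ‖deffuantStep ε c Et p x k‖^2 ≤ ∑ k, ‖x k‖^2 := by
  classical
  induction p using Sym2.ind with
  | _ a b =>
    by_cases hab : a = b
    · subst hab
      refine le_of_eq (Finset.sum_congr rfl fun k _ => ?_)
      rw [deffuantStep_apply_diag]
    · by_cases hc : s(a,b) ∈ Et ∧ ‖x a - x b‖ ≤ ε
      · have := deffuantStep_energy_drop h0 h2 hab hc.1 hc.2
        nlinarith [sq_nonneg ‖x a - x b‖]
      · refine le_of_eq (Finset.sum_congr rfl fun k _ => ?_)
        congr 1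
        by_cases hk : k ∈ s(a,b)
        · rw [Sym2.mem_iff] at hk
          rcases hk with rfl | rfl
          · rw [deffuantStep_apply_left_neg hc]
          · rw [deffuantStep_apply_right_neg hc]
        · rw [deffuantStep_apply_not_mem hk]

lemma walk_norm_le {V : Type*} {W : Type*} [NormedAddCommGroup W] {G : SimpleGraph V}
    (x : V → W) {c : ℝ} (hc : ∀ a b, G.Adj a b → ‖x a - x b‖ ≤ c) {u v : V}
    (w : G.Walk u v) : ‖x u - x v‖ ≤ w.length * c := by
  induction w with
  | nil => simp
  | cons h w ih =>
    rename_i u' m' v'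
    have h1 := hc _ _ h
    calc ‖x u' - x v'‖ ≤ ‖x u' - x m'‖ + ‖x m' - x v'‖ := norm_sub_le_norm_sub_add_norm_sub _ _ _
      _ ≤ c + w.length * c := add_le_add h1 ih
      _ = (w.length + 1) * c := by ring
      _ = ((SimpleGraph.Walk.cons h w).length : ℝ) * c := by
          rw [SimpleGraph.Walk.length_cons]; push_cast; ring

lemma sup2_attained {V : Type*} [Finite V] [Nonempty V] (f : V → V → ℝ) :
    ∃ i j, (⨆ i, ⨆ j, f i j) = f i j := by
  obtain ⟨⟨i, j⟩, hm⟩ := Finite.exists_max (fun q : V × V => f q.1 q.2)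
  refine ⟨i, j, le_antisymm ?_ ?_⟩
  · exact ciSup_le fun i' => ciSup_le fun j' => hm (i', j')
  · exact le_trans (le_ciSup (Set.Finite.bddAbove (Set.finite_range _)) j)
      (le_ciSup (f := fun i => ⨆ j, f i j) (Set.Finite.bddAbove (Set.finite_range _)) i)

lemma le_sup2 {V : Type*} [Finite V] (f : V → V → ℝ) (i j : V) :
    f i j ≤ ⨆ i, ⨆ j, f i j :=
  le_trans (le_ciSup (Set.Finite.bddAbove (Set.finite_range _)) j)
    (le_ciSup (f := fun i => ⨆ j, f i j) (Set.Finite.bddAbove (Set.finite_range _)) i)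

lemma measurable_discrete_comp {Ω' γ β : Type*} {m' : MeasurableSpace Ω'} [MeasurableSpace β]
    [Countable γ] {e' : Ω' → γ} (he : ∀ p : γ, MeasurableSet[m'] {ω | e' ω = p})
    {g : γ → Ω' → β} (hg : ∀ p, Measurable[m'] (g p)) :
    Measurable[m'] fun ω => g (e' ω) ω := by
  intro B hB
  have hrw : (fun ω => g (e' ω) ω) ⁻¹' B = ⋃ p, ({ω | e' ω = p} ∩ g p ⁻¹' B) := by
    ext ω
    simp only [Set.mem_preimage, Set.mem_iUnion, Set.mem_inter_iff, Set.mem_setOf_eq]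
    constructor
    · intro h; exact ⟨e' ω, rfl, h⟩
    · rintro ⟨p, hp, h⟩; rw [hp]; exact h
  rw [hrw]
  exact MeasurableSet.iUnion fun p => (he p).inter (hg p hB)

end Aux2
section Meas
variable {d : ℕ} {V : Type} {Ω : Type*} [MeasurableSpace Ω]

/-- Auxiliary: the set of "big social edges" at time `t`. -/
private def dBig (ε : ℝ) (μ : ℕ → ℝ) (E : ℕ → Set (Sym2 V)) (e : ℕ → Ω → Sym2 V)
    (x0 : V → Ω → EuclideanSpace ℝ (Fin d)) (β : ℝ) (t : ℕ) (ω : Ω) : Set (Sym2 V) :=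
  {p | ∃ a b : V, p = s(a, b) ∧ a ≠ b ∧ s(a, b) ∈ E t ∧
    β ≤ ‖deffuantPath ε μ E e x0 ω t a - deffuantPath ε μ E e x0 ω t b‖ ∧
    ‖deffuantPath ε μ E e x0 ω t a - deffuantPath ε μ E e x0 ω t b‖ ≤ ε}

/-- Auxiliary: the σ-algebra generated by the initial opinions and pair choices before `t`. -/
private noncomputable def dSig (x0 : V → Ω → EuclideanSpace ℝ (Fin d)) (e : ℕ → Ω → Sym2 V)
    (t : ℕ) : MeasurableSpace Ω :=
  ⨆ k ∈ (Set.range Sum.inl ∪ Sum.inr '' Set.Iio t : Set (V ⊕ ℕ)),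
    MeasurableSpace.comap (mixFun x0 e k) (mixMS d V k)

variable {x0 : V → Ω → EuclideanSpace ℝ (Fin d)} {e : ℕ → Ω → Sym2 V}

private lemma dSig_le (hx0 : ∀ i, Measurable (x0 i))
    (he : ∀ t, @Measurable Ω (Sym2 V) _ ⊤ (e t)) (t : ℕ) :
    dSig x0 e t ≤ ‹MeasurableSpace Ω› := by
  refine iSup₂_le fun k _ => ?_
  cases k with
  | inl i => exact measurable_iff_comap_le.mp (hx0 i)
  | inr s => exact measurable_iff_comap_le.mp (he s)

private lemma dSig_mono {s t : ℕ} (h : s ≤ t) : dSig x0 e s ≤ dSig (d := d) x0 e t := by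
  refine biSup_mono fun k hk => ?_
  rcases hk with hk | ⟨u, hu, rfl⟩
  · exact Set.mem_union_left _ hk
  · exact Set.mem_union_right _ ⟨u, lt_of_lt_of_le hu h, rfl⟩

private lemma x0_measurable_dSig (t : ℕ) (i : V) : Measurable[dSig x0 e t] (x0 i) := by
  have h1 : @Measurable Ω _ (MeasurableSpace.comap (mixFun x0 e (Sum.inl i))
      (mixMS d V (Sum.inl i))) (mixMS d V (Sum.inl i)) (mixFun x0 e (Sum.inl i)) :=
    measurable_iff_comap_le.mpr le_rfl
  refine h1.mono ?_ le_rfl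
  rw [dSig]
  exact le_biSup (fun k => MeasurableSpace.comap (mixFun x0 e k) (mixMS d V k))
    (Set.mem_union_left _ (Set.mem_range_self i))

private lemma e_measurable_dSig {s t : ℕ} (h : s < t) :
    @Measurable Ω (Sym2 V) (dSig (d := d) x0 e t) ⊤ (e s) := by
  have h1 : @Measurable Ω _ (MeasurableSpace.comap (mixFun x0 e (Sum.inr s))
      (mixMS d V (Sum.inr s))) (mixMS d V (Sum.inr s)) (mixFun x0 e (Sum.inr s)) :=
    measurable_iff_comap_le.mpr le_rfl
  refine h1.mono ?_ le_rfl
  rw [dSig]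
  exact le_biSup (fun k => MeasurableSpace.comap (mixFun x0 e k) (mixMS d V k))
    (Set.mem_union_right _ (Set.mem_image_of_mem Sum.inr h))

private lemma e_eq_measurable_dSig {s t : ℕ} (h : s < t) (p : Sym2 V) :
    MeasurableSet[dSig (d := d) x0 e t] {ω | e s ω = p} := by
  have h1 := e_measurable_dSig (d := d) (x0 := x0) (e := e) h
    (MeasurableSpace.measurableSet_top (α := Sym2 V) (s := ({p} : Set (Sym2 V))))
  exact h1

private lemma path_measurable [Countable V] (ε : ℝ) (μ : ℕ → ℝ) (E : ℕ → Set (Sym2 V)) :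
    ∀ t i, Measurable[dSig x0 e t] fun ω => deffuantPath ε μ E e x0 ω t i := by
  classical
  intro t
  induction t with
  | zero => exact fun i => x0_measurable_dSig 0 i
  | succ t ih =>
    intro i
    letI : MeasurableSpace Ω := dSig x0 e (t+1)
    have hXt : ∀ j, Measurable[dSig x0 e (t+1)] fun ω => deffuantPath ε μ E e x0 ω t j :=
      fun j => (ih j).mono (dSig_mono (Nat.le_succ t)) le_rfl
    have hestep : ∀ p : Sym2 V, MeasurableSet[dSig (d := d) x0 e (t+1)] {ω | e t ω = p} :=
      fun p => e_eq_measurable_dSig (Nat.lt_succ_self t) p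
    have hrw : (fun ω => deffuantPath ε μ E e x0 ω (t+1) i)
        = fun ω => deffuantStep ε (μ t) (E t) (e t ω) (deffuantPath ε μ E e x0 ω t) i := rfl
    rw [hrw]
    refine measurable_discrete_comp (e' := e t) hestep
      (g := fun p ω => deffuantStep ε (μ t) (E t) p (deffuantPath ε μ E e x0 ω t) i)
      (fun p => ?_)
    show Measurable[dSig x0 e (t+1)]
      fun ω => deffuantStep ε (μ t) (E t) p (deffuantPath ε μ E e x0 ω t) i
    by_cases hip : i ∈ p
    · have heq : (fun ω => deffuantStep ε (μ t) (E t) p (deffuantPath ε μ E e x0 ω t) i)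
          = fun ω => if p ∈ E t ∧ ‖deffuantPath ε μ E e x0 ω t i
                - deffuantPath ε μ E e x0 ω t (Sym2.Mem.other hip)‖ ≤ ε
              then deffuantPath ε μ E e x0 ω t i + (μ t) •
                (deffuantPath ε μ E e x0 ω t (Sym2.Mem.other hip)
                  - deffuantPath ε μ E e x0 ω t i)
              else deffuantPath ε μ E e x0 ω t i := by
        funext ω; unfold deffuantStep; rw [dif_pos hip]
    
      rw [heq]
      by_cases hpE : p ∈ E t
      · refine Measurable.ite ?_ ?_ ?_
        · simp only [hpE, true_and]
          exact measurableSet_le (((hXt i).sub (hXt _)).norm) measurable_const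
        · exact (hXt i).add (by have := ((hXt (Sym2.Mem.other hip)).sub (hXt i)).const_smul (μ t); exact this)
        · exact hXt i
      · simp only [hpE, false_and, if_false]
        exact hXt i
    · have heq : (fun ω => deffuantStep ε (μ t) (E t) p (deffuantPath ε μ E e x0 ω t) i)
          = fun ω => deffuantPath ε μ E e x0 ω t i :=
        funext fun ω => deffuantStep_apply_not_mem hip
      rw [heq]
      exact hXt i

end Meas
section Meas2
variable {d : ℕ} {V : Type} {Ω : Type*} [MeasurableSpace Ω]
variable {x0 : V → Ω → EuclideanSpace ℝ (Fin d)} {e : ℕ → Ω → Sym2 V}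

private lemma big_mem_measurable [Countable V] (ε : ℝ) (μ : ℕ → ℝ) (E : ℕ → Set (Sym2 V))
    (β : ℝ) (t : ℕ) (p : Sym2 V) :
    MeasurableSet[dSig x0 e t] {ω | p ∈ dBig ε μ E e x0 β t ω} := by
  classical
  letI : MeasurableSpace Ω := dSig x0 e t
  have hset : {ω | p ∈ dBig ε μ E e x0 β t ω}
      = ⋃ (a : V), ⋃ (b : V), {ω | (p = s(a,b) ∧ a ≠ b ∧ s(a,b) ∈ E t) ∧
          (β ≤ ‖deffuantPath ε μ E e x0 ω t a - deffuantPath ε μ E e x0 ω t b‖ ∧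
           ‖deffuantPath ε μ E e x0 ω t a - deffuantPath ε μ E e x0 ω t b‖ ≤ ε)} := by
    ext ω
    simp only [dBig, Set.mem_setOf_eq, Set.mem_iUnion]
    constructor
    · rintro ⟨a, b, h1, h2, h3, h4, h5⟩; exact ⟨a, b, ⟨h1, h2, h3⟩, h4, h5⟩
    · rintro ⟨a, b, ⟨h1, h2, h3⟩, h4, h5⟩; exact ⟨a, b, h1, h2, h3, h4, h5⟩
  rw [hset]
  refine MeasurableSet.iUnion fun a => MeasurableSet.iUnion fun b => ?_
  have hnorm : Measurable[dSig x0 e t] fun ω =>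
      ‖deffuantPath ε μ E e x0 ω t a - deffuantPath ε μ E e x0 ω t b‖ :=
    ((path_measurable ε μ E t a).sub (path_measurable ε μ E t b)).norm
  by_cases hconst : p = s(a,b) ∧ a ≠ b ∧ s(a,b) ∈ E t
  · have hseteq : {ω | (p = s(a,b) ∧ a ≠ b ∧ s(a,b) ∈ E t) ∧
        (β ≤ ‖deffuantPath ε μ E e x0 ω t a - deffuantPath ε μ E e x0 ω t b‖ ∧
         ‖deffuantPath ε μ E e x0 ω t a - deffuantPath ε μ E e x0 ω t b‖ ≤ ε)}
        = {ω | β ≤ ‖deffuantPath ε μ E e x0 ω t a - deffuantPath ε μ E e x0 ω t b‖}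
          ∩ {ω | ‖deffuantPath ε μ E e x0 ω t a - deffuantPath ε μ E e x0 ω t b‖ ≤ ε} := by
      ext ω; simp only [Set.mem_setOf_eq, Set.mem_inter_iff]; tauto
    rw [hseteq]
    exact (measurableSet_le measurable_const hnorm).inter
      (measurableSet_le hnorm measurable_const)
  · have hseteq : {ω | (p = s(a,b) ∧ a ≠ b ∧ s(a,b) ∈ E t) ∧
        (β ≤ ‖deffuantPath ε μ E e x0 ω t a - deffuantPath ε μ E e x0 ω t b‖ ∧
         ‖deffuantPath ε μ E e x0 ω t a - deffuantPath ε μ E e x0 ω t b‖ ≤ ε)}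
        = (∅ : Set Ω) := by
      ext ω; simp only [Set.mem_setOf_eq, Set.mem_empty_iff_false, iff_false]; tauto
    rw [hseteq]
    exact MeasurableSet.empty

private lemma big_eq_measurable [Countable V] (ε : ℝ) (μ : ℕ → ℝ) (E : ℕ → Set (Sym2 V))
    (β : ℝ) (t : ℕ) (S : Set (Sym2 V)) :
    MeasurableSet[dSig x0 e t] {ω | dBig ε μ E e x0 β t ω = S} := by
  classical
  letI : MeasurableSpace Ω := dSig x0 e t
  have hset : {ω | dBig ε μ E e x0 β t ω = S}
      = ⋂ p : Sym2 V, {ω | p ∈ dBig ε μ E e x0 β t ω ↔ p ∈ S} := by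
    ext ω
    simp only [Set.mem_setOf_eq, Set.mem_iInter, Set.ext_iff]
  rw [hset]
  refine MeasurableSet.iInter fun p => ?_
  by_cases hp : p ∈ S
  · simp only [hp, iff_true]
    exact big_mem_measurable ε μ E β t p
  · simp only [hp, iff_false]
    exact (big_mem_measurable (x0 := x0) (e := e) ε μ E β t p).compl

private lemma dSig_indep {P : Measure Ω}
    (hx0 : ∀ i, Measurable (x0 i)) (he : ∀ t, @Measurable Ω (Sym2 V) _ ⊤ (e t))
    (hindep : @iIndepFun _ _ _ _ (mixMS d V) (mixFun x0 e) P) (t : ℕ) :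
    Indep (dSig x0 e t) (MeasurableSpace.comap (e t) ⊤) P := by
  have hd : Disjoint (Set.range Sum.inl ∪ Sum.inr '' Set.Iio t : Set (V ⊕ ℕ))
      ({Sum.inr t} : Set (V ⊕ ℕ)) := by
    rw [Set.disjoint_left]
    intro k hk hk'
    rw [Set.mem_singleton_iff] at hk'
    subst hk'
    rcases hk with ⟨i, hi⟩ | ⟨s, hs, hinj⟩
    · exact absurd hi (by simp)
    · rw [Set.mem_Iio] at hs
      have : s = t := Sum.inr.inj hinj
      omega
  have hle : ∀ k : V ⊕ ℕ, MeasurableSpace.comap (mixFun x0 e k) (mixMS d V k)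
      ≤ ‹MeasurableSpace Ω› := by
    intro k
    cases k with
    | inl i => exact measurable_iff_comap_le.mp (hx0 i)
    | inr s => exact measurable_iff_comap_le.mp (he s)
  have h := indep_iSup_of_disjoint
      (m := fun k => MeasurableSpace.comap (mixFun x0 e k) (mixMS d V k))
      hle ((iIndepFun_iff_iIndep _ _ _).mp hindep) hd
  rw [iSup_singleton] at h
  exact h

end Meas2
/-- Lemma 4 of the paper. If `inf_t μ(t) > 0`, `ε > rHat` and the social
graph is connected for infinitely many times, then for `0 < η < ε - rHat` and `δ = η / |V|`,
the event that `T_δ < ∞` and some opinion at time `T_δ` is within `ε - rHat - η` of the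
Chebyshev center `cHat` is almost surely contained in the consensus event `𝒞`. -/
theorem deffuant_event_subset_consensus
    {d : ℕ} (hd : 1 ≤ d) {V : Type} [Fintype V] (hV : 2 ≤ Fintype.card V)
    {Ω : Type*} [MeasurableSpace Ω] (P : Measure Ω) [IsProbabilityMeasure P]
    (e : ℕ → Ω → Sym2 V)
    (hemeas : ∀ t, @Measurable Ω (Sym2 V) _ ⊤ (e t))
    (hunif : ∀ t, ∀ p : Sym2 V, ¬ p.IsDiag →
      P {ω | e t ω = p} = ((Nat.card {q : Sym2 V // ¬ q.IsDiag} : ℝ≥0∞))⁻¹)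
    (x0 : V → Ω → EuclideanSpace ℝ (Fin d))
    (hx0meas : ∀ i, Measurable (x0 i))
    (hindep : @iIndepFun _ _ _ _ (mixMS d V) (mixFun x0 e) P)
    (hx0id : ∀ i j : V, Measure.map (x0 i) P = Measure.map (x0 j) P)
    (Δ : Set (EuclideanSpace ℝ (Fin d))) (hΔne : Δ.Nonempty)
    (hΔbd : Bornology.IsBounded Δ) (hΔconv : Convex ℝ Δ)
    (hx0Δ : ∀ i ω, x0 i ω ∈ Δ)
    (cHat : EuclideanSpace ℝ (Fin d))
    (hcHat : ∀ c, (⨆ z : Δ, ‖(z : EuclideanSpace ℝ (Fin d)) - cHat‖) ≤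
      ⨆ z : Δ, ‖(z : EuclideanSpace ℝ (Fin d)) - c‖)
    (rHat : ℝ) (hrHat : rHat = ⨆ z : Δ, ‖(z : EuclideanSpace ℝ (Fin d)) - cHat‖)
    (ε : ℝ) (hε : rHat < ε)
    (μ : ℕ → ℝ) (hμ : ∀ t, μ t ∈ Set.Icc (0 : ℝ) (1 / 2)) (hinf : 0 < ⨅ t, μ t)
    (E : ℕ → Set (Sym2 V))
    (hconn : ∃ᶠ t in Filter.atTop, (socialGraph (E t)).Connected)
    (η : ℝ) (hη : 0 < η) (hηε : η < ε - rHat)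
    (δ : ℝ) (hδ : δ = η / Fintype.card V) :
    P ({ω | (goodTimes ε δ μ E e x0 ω).Nonempty ∧
          ∃ i : V, ‖deffuantPath ε μ E e x0 ω (sInf (goodTimes ε δ μ E e x0 ω)) i - cHat‖
            ≤ ε - rHat - η}
        \ consensusSet ε μ E e x0) = 0 := by
  classical
  have hVne : Nonempty V := Fintype.card_pos_iff.mp (by omega)
  set n : ℕ := Fintype.card V with hn
  have hn0 : 0 < n := by omega
  have hnR : (0:ℝ) < n := by exact_mod_cast hn0
  -- opinion path abbreviation
  set X : Ω → ℕ → V → EuclideanSpace ℝ (Fin d) := fun ω => deffuantPath ε μ E e x0 ω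
    with hXdef
  have hstep : ∀ ω t, X ω (t+1) = deffuantStep ε (μ t) (E t) (e t ω) (X ω t) :=
    fun ω t => rfl
  -- μ bounds
  set μ₀ : ℝ := ⨅ t, μ t with hμ₀def
  have hμbdd : BddBelow (Set.range μ) := ⟨0, by rintro _ ⟨t, rfl⟩; exact (hμ t).1⟩
  have hμ₀le : ∀ t, μ₀ ≤ μ t := fun t => ciInf_le hμbdd t
  have hμ₀pos : 0 < μ₀ := hinf
  -- rHat ≥ 0 and η < ε
  have hr0 : 0 ≤ rHat := by
    obtain ⟨z, hz⟩ := hΔne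
    obtain ⟨R, hR⟩ := hΔbd.subset_closedBall cHat
    have hbd : BddAbove (Set.range fun w : Δ => ‖(w : EuclideanSpace ℝ (Fin d)) - cHat‖) := by
      refine ⟨R, ?_⟩
      rintro _ ⟨w, rfl⟩
      have := hR w.2
      rw [Metric.mem_closedBall, dist_eq_norm] at this
      exact this
    have hle := le_ciSup hbd (⟨z, hz⟩ : Δ)
    rw [hrHat]
    exact le_trans (norm_nonneg _) hle
  have hηltε : η < ε := by linarith
  have hδpos : 0 < δ := by rw [hδ]; positivity
  have hδη : (n:ℝ) * δ = η := by
    rw [hδ]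
    field_simp
  -- diameter
  set D : Ω → ℕ → ℝ := fun ω t => ⨆ i, ⨆ j, ‖X ω t i - X ω t j‖ with hDdef
  have hDge : ∀ ω t (i j : V), ‖X ω t i - X ω t j‖ ≤ D ω t := fun ω t i j =>
    le_sup2 (fun i j => ‖X ω t i - X ω t j‖) i j
  have hDle : ∀ ω t (c : ℝ), (∀ i j : V, ‖X ω t i - X ω t j‖ ≤ c) → D ω t ≤ c :=
    fun ω t c h => ciSup_le fun i => ciSup_le fun j => h i j
  have hD0 : ∀ ω t, 0 ≤ D ω t := fun ω t =>
    le_trans (norm_nonneg _) (hDge ω t (Classical.arbitrary V) (Classical.arbitrary V))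
  have hDanti : ∀ ω, Antitone (D ω) := by
    intro ω
    refine antitone_nat_of_succ_le fun t => ?_
    refine hDle ω (t+1) _ fun i j => ?_
    rw [hstep]
    exact deffuantStep_dist_le (hμ t).1 (le_trans (hμ t).2 (by norm_num)) (hDge ω t) i j
  -- energy
  set En : Ω → ℕ → ℝ := fun ω t => ∑ k, ‖X ω t k‖^2 with hEndef
  have hEn0 : ∀ ω t, 0 ≤ En ω t := fun ω t => Finset.sum_nonneg fun k _ => sq_nonneg _
  have hEnanti : ∀ ω, Antitone (En ω) := by
    intro ω
    refine antitone_nat_of_succ_le fun t => ?_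
    have h1 : En ω (t+1) = ∑ k, ‖deffuantStep ε (μ t) (E t) (e t ω) (X ω t) k‖^2 := by
      rw [hEndef]; simp only []; rw [hstep]
    rw [h1]
    exact deffuantStep_energy_le (hμ t).1 (hμ t).2 _ _
  -- diameter bound at good times
  have hgood : ∀ ω m, m ∈ goodTimes ε δ μ E e x0 ω → D ω m < η := by
    intro ω m hm
    obtain ⟨hpc, hsm⟩ := hm
    have hbound : ∀ i j : V, ‖X ω m i - X ω m j‖ ≤ ((n-1 : ℕ) : ℝ) * δ := by
      intro i j
      obtain ⟨w⟩ := hpc.preconnected i j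
      have hlen : w.toPath.1.length ≤ n - 1 :=
        Nat.le_sub_one_of_lt (SimpleGraph.Walk.IsPath.length_lt w.toPath.2)
      have hadj : ∀ a b, (profileGraph ε (E m) (X ω m)).Adj a b →
          ‖X ω m a - X ω m b‖ ≤ δ := by
        intro a b hab
        exact hsm m le_rfl a b hab.2.1 hab.2.2
      calc ‖X ω m i - X ω m j‖ ≤ (w.toPath.1.length : ℝ) * δ :=
            walk_norm_le (X ω m) hadj w.toPath.1
        _ ≤ ((n-1:ℕ):ℝ) * δ :=
            mul_le_mul_of_nonneg_right (by exact_mod_cast hlen) hδpos.le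
    calc D ω m ≤ ((n-1:ℕ):ℝ) * δ := hDle ω m _ hbound
      _ < (n:ℝ) * δ :=
          mul_lt_mul_of_pos_right (by exact_mod_cast Nat.sub_lt hn0 one_pos) hδpos
      _ = η := hδη
  -- connected times
  obtain ⟨φ, hφmono, hφconn⟩ := Filter.extraction_of_frequently_atTop hconn
  have hφge : ∀ k, k ≤ φ k := fun k => hφmono.le_apply
  -- number of nondiagonal pairs
  set N : ℕ := Nat.card {q : Sym2 V // ¬ q.IsDiag} with hNdef
  have hNpos : 0 < N := by
    obtain ⟨a, b, hab⟩ := Fintype.exists_pair_of_one_lt_card (α := V) (by omega)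
    have : Nonempty {q : Sym2 V // ¬ q.IsDiag} := ⟨⟨s(a,b), by simpa using hab⟩⟩
    exact Nat.card_pos
  set κ : ℝ≥0∞ := 1 - (N:ℝ≥0∞)⁻¹ with hκdef
  have hκlt : κ < 1 := by
    rw [hκdef]
    refine ENNReal.sub_lt_self ENNReal.one_ne_top one_ne_zero ?_
    simp [hNpos.ne']
  -- thresholds
  set β : ℕ → ℝ := fun jj => (1:ℝ)/(jj+1)/n with hβdef
  have hβpos : ∀ jj, 0 < β jj := fun jj => by rw [hβdef]; positivity
  -- events
  set Miss : ℕ → ℕ → Set Ω := fun jj k =>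
    {ω | (dBig ε μ E e x0 (β jj) (φ k) ω).Nonempty ∧
      e (φ k) ω ∉ dBig ε μ E e x0 (β jj) (φ k) ω} with hMissdef
  -- pointwise inclusion
  have hsub : {ω | (goodTimes ε δ μ E e x0 ω).Nonempty ∧
          ∃ i : V, ‖deffuantPath ε μ E e x0 ω (sInf (goodTimes ε δ μ E e x0 ω)) i - cHat‖
            ≤ ε - rHat - η}
        \ consensusSet ε μ E e x0
      ⊆ ⋃ (jj : ℕ), ⋃ (M₁ : ℕ), ⋂ (k : ℕ), ⋂ (_ : M₁ ≤ k), Miss jj k := by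
    rintro ω ⟨hA, hnc⟩
    obtain ⟨hgne, -⟩ := hA
    set m := sInf (goodTimes ε δ μ E e x0 ω) with hmdef
    have hm : m ∈ goodTimes ε δ μ E e x0 ω := Nat.sInf_mem hgne
    have hbdd : BddBelow (Set.range (D ω)) := ⟨0, by rintro _ ⟨t, rfl⟩; exact hD0 ω t⟩
    have htend : Tendsto (D ω) atTop (𝓝 (⨅ t, D ω t)) := tendsto_atTop_ciInf (hDanti ω) hbdd
    have hL0 : 0 ≤ ⨅ t, D ω t := le_ciInf fun t => hD0 ω t
    have hLne : ⨅ t, D ω t ≠ 0 := by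
      intro h0
      apply hnc
      show Filter.limsup (fun t => ⨆ i : V, ⨆ j : V,
        ‖deffuantPath ε μ E e x0 ω t i - deffuantPath ε μ E e x0 ω t j‖) Filter.atTop = 0
      have h1 : Filter.limsup (D ω) atTop = ⨅ t, D ω t := htend.limsup_eq
      rw [h0] at h1
      exact h1
    have hLpos : 0 < ⨅ t, D ω t := lt_of_le_of_ne hL0 (Ne.symm hLne)
    obtain ⟨jj, hjj⟩ := exists_nat_one_div_lt hLpos
    have hq : ∀ s, (1:ℝ)/(jj+1) ≤ D ω s := fun s =>
      le_trans hjj.le (ciInf_le hbdd s)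
    -- dBig is nonempty from time m on
    have hBigne : ∀ k, m ≤ k → (dBig ε μ E e x0 (β jj) (φ k) ω).Nonempty := by
      intro k hk
      obtain ⟨i0, j0, hij⟩ := sup2_attained (fun i j => ‖X ω (φ k) i - X ω (φ k) j‖)
      have hq' : (1:ℝ)/(jj+1) ≤ ‖X ω (φ k) i0 - X ω (φ k) j0‖ := by
        have := hq (φ k)
        rw [hDdef] at this
        simp only [] at this
        rw [hij] at this
        exact this
      by_contra hno
      rw [Set.not_nonempty_iff_eq_empty] at hno
      have hadj : ∀ a b, (socialGraph (E (φ k))).Adj a b →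
          ‖X ω (φ k) a - X ω (φ k) b‖ ≤ β jj := by
        intro a b hab
        by_contra hgt
        push_neg at hgt
        have hle : ‖X ω (φ k) a - X ω (φ k) b‖ ≤ ε := by
          calc ‖X ω (φ k) a - X ω (φ k) b‖ ≤ D ω (φ k) := hDge ω (φ k) a b
            _ ≤ D ω m := hDanti ω (le_trans hk (hφge k))
            _ ≤ ε := (lt_trans (hgood ω m hm) hηltε).le
        have hmem : s(a,b) ∈ dBig ε μ E e x0 (β jj) (φ k) ω :=
          ⟨a, b, rfl, hab.1, hab.2, hgt.le, hle⟩
        rw [hno] at hmem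
        exact hmem
      obtain ⟨w⟩ := (hφconn k).preconnected i0 j0
      have hlen : w.toPath.1.length ≤ n - 1 :=
        Nat.le_sub_one_of_lt (SimpleGraph.Walk.IsPath.length_lt w.toPath.2)
      have hww := walk_norm_le (X ω (φ k)) hadj w.toPath.1
      have hq2 : (1:ℝ)/(jj+1) ≤ ((n-1:ℕ):ℝ) * β jj := by
        calc (1:ℝ)/(jj+1) ≤ ‖X ω (φ k) i0 - X ω (φ k) j0‖ := hq'
          _ ≤ (w.toPath.1.length : ℝ) * β jj := hww
          _ ≤ ((n-1:ℕ):ℝ) * β jj :=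
              mul_le_mul_of_nonneg_right (by exact_mod_cast hlen) (hβpos jj).le
      have hq3 : ((n-1:ℕ):ℝ) * β jj < (n:ℝ) * β jj :=
        mul_lt_mul_of_pos_right (by exact_mod_cast Nat.sub_lt hn0 one_pos) (hβpos jj)
      have hq4 : (n:ℝ) * β jj = 1/(jj+1) := by
        rw [hβdef]
        field_simp
      linarith
    -- each success drops the energy
    have hdrop : ∀ k, e (φ k) ω ∈ dBig ε μ E e x0 (β jj) (φ k) ω →
        En ω (φ k + 1) ≤ En ω (φ k) - μ₀ * (β jj)^2 := by
      intro k hsucc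
      obtain ⟨a, b, hp, hab, hEm, hβle, hεle⟩ := hsucc
      have h1 : En ω (φ k + 1)
          = ∑ l, ‖deffuantStep ε (μ (φ k)) (E (φ k)) s(a,b) (X ω (φ k)) l‖^2 := by
        rw [hEndef]
        simp only []
        rw [hstep, hp]
      have h2 := deffuantStep_energy_drop (x := X ω (φ k))
        (hμ (φ k)).1 (hμ (φ k)).2 hab hEm hεle
      have h3 : μ₀ * (β jj)^2 ≤ μ (φ k) * ‖X ω (φ k) a - X ω (φ k) b‖^2 :=
        mul_le_mul (hμ₀le _) (pow_le_pow_left₀ (hβpos jj).le hβle 2)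
          (by positivity) ((hμ _).1)
      rw [h1]
      have h4 : En ω (φ k) = ∑ l, ‖X ω (φ k) l‖^2 := by rw [hEndef]
      rw [h4]
      linarith
    -- finitely many successes
    have hfin : ∃ M', ∀ k, M' ≤ k → e (φ k) ω ∉ dBig ε μ E e x0 (β jj) (φ k) ω := by
      by_contra hc
      push_neg at hc
      have hiter : ∀ c : ℕ, ∃ s, En ω s ≤ En ω 0 - c * (μ₀ * (β jj)^2) := by
        intro c
        induction c with
        | zero => exact ⟨0, by simp⟩
        | succ c ih =>
          obtain ⟨s, hs⟩ := ih
          obtain ⟨k, hk, hsucc⟩ := hc s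
          refine ⟨φ k + 1, ?_⟩
          have h5 : En ω (φ k) ≤ En ω s := hEnanti ω (le_trans hk (hφge k))
          have h6 := hdrop k hsucc
          push_cast
          linarith
      obtain ⟨c, hcgt⟩ := exists_nat_gt (En ω 0 / (μ₀ * (β jj)^2))
      obtain ⟨s, hs⟩ := hiter c
      have hpos : 0 < μ₀ * (β jj)^2 := by positivity
      rw [div_lt_iff₀ hpos] at hcgt
      have := hEn0 ω s
      linarith
    obtain ⟨M', hM'⟩ := hfin
    refine Set.mem_iUnion.mpr ⟨jj, Set.mem_iUnion.mpr ⟨max M' m, ?_⟩⟩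
    refine Set.mem_iInter.mpr fun k => Set.mem_iInter.mpr fun hk => ?_
    exact ⟨hBigne k (le_trans (le_max_right _ _) hk),
      hM' k (le_trans (le_max_left _ _) hk)⟩
  -- it suffices to show each tail event is null
  refine measure_mono_null hsub ?_
  refine measure_iUnion_null fun jj => measure_iUnion_null fun M₁ => ?_
  -- measurability of Miss
  have hMissG : ∀ k, MeasurableSet[dSig x0 e (φ k + 1)] (Miss jj k) := by
    intro k
    letI : MeasurableSpace Ω := dSig x0 e (φ k + 1)
    have hlift : dSig (d := d) x0 e (φ k) ≤ dSig x0 e (φ k + 1) :=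
      dSig_mono (Nat.le_succ _)
    have hBigm : ∀ p : Sym2 V, MeasurableSet {ω | p ∈ dBig ε μ E e x0 (β jj) (φ k) ω} :=
      fun p => (MeasurableSpace.le_def.mp hlift) _
        (big_mem_measurable ε μ E (β jj) (φ k) p)
    have hne : MeasurableSet {ω | (dBig ε μ E e x0 (β jj) (φ k) ω).Nonempty} := by
      have h1 : {ω | (dBig ε μ E e x0 (β jj) (φ k) ω).Nonempty}
          = ⋃ p : Sym2 V, {ω | p ∈ dBig ε μ E e x0 (β jj) (φ k) ω} := by
        ext ω
        simp only [Set.mem_setOf_eq, Set.mem_iUnion, Set.Nonempty]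
      rw [h1]
      exact MeasurableSet.iUnion hBigm
    have hnotmem : MeasurableSet {ω | e (φ k) ω ∉ dBig ε μ E e x0 (β jj) (φ k) ω} := by
      have h1 : {ω | e (φ k) ω ∈ dBig ε μ E e x0 (β jj) (φ k) ω}
          = ⋃ p : Sym2 V, ({ω | e (φ k) ω = p}
              ∩ {ω | p ∈ dBig ε μ E e x0 (β jj) (φ k) ω}) := by
        ext ω
        simp only [Set.mem_setOf_eq, Set.mem_iUnion, Set.mem_inter_iff]
        constructor
        · intro h; exact ⟨e (φ k) ω, rfl, h⟩
        · rintro ⟨p, hp, h⟩; rw [hp]; exact h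
      have h2 : MeasurableSet {ω | e (φ k) ω ∈ dBig ε μ E e x0 (β jj) (φ k) ω} := by
        rw [h1]
        exact MeasurableSet.iUnion fun p =>
          (e_eq_measurable_dSig (Nat.lt_succ_self _) p).inter (hBigm p)
      exact h2.compl
    exact hne.inter hnotmem
  have hMissAmb : ∀ k, MeasurableSet (Miss jj k) := fun k =>
    (MeasurableSpace.le_def.mp (dSig_le hx0meas hemeas (φ k + 1))) _ (hMissG k)
  -- the events F
  set F : ℕ → Set Ω := fun c => ⋂ k ∈ Finset.range c, Miss jj (M₁ + k) with hFdef
  have hFG : ∀ c, MeasurableSet[dSig x0 e (φ (M₁ + c))] (F c) := by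
    intro c
    letI : MeasurableSpace Ω := dSig x0 e (φ (M₁ + c))
    refine Finset.measurableSet_biInter _ fun k hk => ?_
    have hk' : k < c := Finset.mem_range.mp hk
    have hle : φ (M₁ + k) + 1 ≤ φ (M₁ + c) := Nat.succ_le_of_lt (hφmono (by omega))
    exact (MeasurableSpace.le_def.mp (dSig_mono hle)) _ (hMissG (M₁ + k))
  have hFAmb : ∀ c, MeasurableSet (F c) := fun c =>
    (MeasurableSpace.le_def.mp (dSig_le hx0meas hemeas _)) _ (hFG c)
  -- independence and complement probability
  have hindep' : ∀ t : ℕ, Indep (dSig x0 e t) (MeasurableSpace.comap (e t) ⊤) P :=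
    dSig_indep hx0meas hemeas hindep
  have hPcompl : ∀ t (p : Sym2 V), ¬ p.IsDiag → P ({ω | e t ω = p}ᶜ) = κ := by
    intro t p hp
    have hms : MeasurableSet {ω | e t ω = p} :=
      hemeas t (MeasurableSpace.measurableSet_top (s := ({p} : Set (Sym2 V))))
    rw [prob_compl_eq_one_sub hms, hunif t p hp, hκdef]
  -- recursion
  have hrec : ∀ c, P (F (c+1)) ≤ κ * P (F c) := by
    intro c
    have hFsucc : F (c+1) = Miss jj (M₁ + c) ∩ F c := by
      rw [hFdef]
      simp only []
      rw [Finset.range_add_one, Finset.set_biInter_insert]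
    set t : ℕ := φ (M₁ + c) with htdef
    have hcover : ∀ (G : Set Ω),
        G = ⋃ S : Set (Sym2 V), G ∩ {ω | dBig ε μ E e x0 (β jj) t ω = S} := by
      intro G
      ext ω
      simp only [Set.mem_iUnion, Set.mem_inter_iff, Set.mem_setOf_eq]
      constructor
      · intro h; exact ⟨_, h, rfl⟩
      · rintro ⟨S, h, -⟩; exact h
    have hSbound : ∀ S : Set (Sym2 V),
        P (F (c+1) ∩ {ω | dBig ε μ E e x0 (β jj) t ω = S}) ≤
        κ * P (F c ∩ {ω | dBig ε μ E e x0 (β jj) t ω = S}) := by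
      intro S
      by_cases hS : ∃ p₀ ∈ S, ¬ p₀.IsDiag
      · obtain ⟨p₀, hp₀S, hp₀⟩ := hS
        have hsub2 : F (c+1) ∩ {ω | dBig ε μ E e x0 (β jj) t ω = S}
            ⊆ (F c ∩ {ω | dBig ε μ E e x0 (β jj) t ω = S}) ∩ {ω | e t ω = p₀}ᶜ := by
          rintro ω ⟨hω1, hω2⟩
          rw [hFsucc] at hω1
          obtain ⟨hmiss, hFc⟩ := hω1
          refine ⟨⟨hFc, hω2⟩, ?_⟩
          intro heq
          rw [Set.mem_setOf_eq] at heq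
          apply hmiss.2
          rw [heq]
          rw [Set.mem_setOf_eq] at hω2
          rw [hω2]
          exact hp₀S
        have hmeasG : MeasurableSet[dSig x0 e t]
            (F c ∩ {ω | dBig ε μ E e x0 (β jj) t ω = S}) :=
          (hFG c).inter (big_eq_measurable ε μ E (β jj) t S)
        have hmeasT : MeasurableSet[MeasurableSpace.comap (e t) ⊤]
            ({ω | e t ω = p₀}ᶜ) := by
          refine ⟨({p₀} : Set (Sym2 V))ᶜ, trivial, ?_⟩
          ext ω
          simp [Set.mem_compl_iff]
        have hmul := (Indep_iff _ _ P).mp (hindep' t) _ _ hmeasG hmeasT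
        calc P (F (c+1) ∩ {ω | dBig ε μ E e x0 (β jj) t ω = S})
            ≤ P ((F c ∩ {ω | dBig ε μ E e x0 (β jj) t ω = S}) ∩ {ω | e t ω = p₀}ᶜ) :=
              measure_mono hsub2
          _ = P (F c ∩ {ω | dBig ε μ E e x0 (β jj) t ω = S}) * P ({ω | e t ω = p₀}ᶜ) :=
              hmul
          _ = P (F c ∩ {ω | dBig ε μ E e x0 (β jj) t ω = S}) * κ := by
              rw [hPcompl t p₀ hp₀]
          _ = κ * P (F c ∩ {ω | dBig ε μ E e x0 (β jj) t ω = S}) := mul_comm _ _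
      · have hempty : F (c+1) ∩ {ω | dBig ε μ E e x0 (β jj) t ω = S} = ∅ := by
          rw [Set.eq_empty_iff_forall_notMem]
          rintro ω ⟨hω1, hω2⟩
          rw [hFsucc] at hω1
          obtain ⟨hmiss, -⟩ := hω1
          obtain ⟨p, hpBig⟩ := hmiss.1
          push_neg at hS
          rw [Set.mem_setOf_eq] at hω2
          have hpS : p ∈ S := hω2 ▸ hpBig
          have hdiag := hS p hpS
          obtain ⟨a, b, hpeq, hab, -⟩ := hpBig
          rw [hpeq] at hdiag
          exact hab (Sym2.mk_isDiag_iff.mp hdiag)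
        rw [hempty]
        simp
    have hdisj : Pairwise (Function.onFun Disjoint
        (fun S : Set (Sym2 V) => F c ∩ {ω | dBig ε μ E e x0 (β jj) t ω = S})) := by
      intro S S' hne
      refine Set.disjoint_left.mpr ?_
      rintro ω ⟨-, h1⟩ ⟨-, h2⟩
      rw [Set.mem_setOf_eq] at h1 h2
      exact hne (h1.symm.trans h2)
    have hmeas' : ∀ S : Set (Sym2 V),
        MeasurableSet (F c ∩ {ω | dBig ε μ E e x0 (β jj) t ω = S}) := fun S =>
      (MeasurableSpace.le_def.mp (dSig_le hx0meas hemeas t)) _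
        ((hFG c).inter (big_eq_measurable ε μ E (β jj) t S))
    calc P (F (c+1))
        = P (⋃ S : Set (Sym2 V), F (c+1) ∩ {ω | dBig ε μ E e x0 (β jj) t ω = S}) := by
          rw [← hcover (F (c+1))]
      _ ≤ ∑' S : Set (Sym2 V), P (F (c+1) ∩ {ω | dBig ε μ E e x0 (β jj) t ω = S}) :=
          measure_iUnion_le _
      _ ≤ ∑' S : Set (Sym2 V), κ * P (F c ∩ {ω | dBig ε μ E e x0 (β jj) t ω = S}) :=
          ENNReal.tsum_le_tsum hSbound
      _ = κ * ∑' S : Set (Sym2 V), P (F c ∩ {ω | dBig ε μ E e x0 (β jj) t ω = S}) :=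
          ENNReal.tsum_mul_left
      _ = κ * P (⋃ S : Set (Sym2 V), F c ∩ {ω | dBig ε μ E e x0 (β jj) t ω = S}) := by
          rw [measure_iUnion hdisj hmeas']
      _ = κ * P (F c) := by rw [← hcover (F c)]
  have hFbound : ∀ c, P (F c) ≤ κ ^ c := by
    intro c
    induction c with
    | zero =>
      have : F 0 = Set.univ := by
        rw [hFdef]
        simp
      rw [this, pow_zero]
      exact le_of_eq measure_univ
    | succ c ih =>
      calc P (F (c+1)) ≤ κ * P (F c) := hrec c
        _ ≤ κ * κ^c := mul_le_mul_right ih κ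
        _ = κ^(c+1) := by rw [pow_succ]; ring
  -- conclude
  have hsub3 : (⋂ (k : ℕ), ⋂ (_ : M₁ ≤ k), Miss jj k) ⊆ ⋂ c, F c := by
    intro ω hω
    refine Set.mem_iInter.mpr fun c => ?_
    rw [hFdef]
    simp only []
    refine Set.mem_iInter₂.mpr fun k hk => ?_
    exact Set.mem_iInter.mp (Set.mem_iInter.mp hω (M₁ + k)) (Nat.le_add_right _ _)
  have hlim : Tendsto (fun c => κ ^ c) atTop (𝓝 0) :=
    ENNReal.tendsto_pow_atTop_nhds_zero_of_lt_one hκlt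
  have hle0 : P (⋂ (k : ℕ), ⋂ (_ : M₁ ≤ k), Miss jj k) ≤ 0 := by
    refine ge_of_tendsto' hlim fun c => ?_
    calc P (⋂ (k : ℕ), ⋂ (_ : M₁ ≤ k), Miss jj k) ≤ P (F c) :=
          measure_mono (le_trans hsub3 (Set.iInter_subset _ c))
      _ ≤ κ ^ c := hFbound c
  exact le_antisymm hle0 zero_le
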